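/- LP^MLN programs 𝔽 and 𝔾 over 𝒫 are structurally equivalent if and only if they have exactly the same soft HT models. -/

import Mathlib

namespace LPMLN

/-- Propositional formulas over a set of atoms `P`, built from atoms and `⊥`
using `∧`, `∨`, `→`. -/
inductive Formula (P : Type) : Type where
  | atom : P → Formula P
  | bot  : Formula P
  | and  : Formula P → Formula P → Formula P
  | or   : Formula P → Formula P → Formula P
  | imp  : Formula P → Formula P → Formula P
deriving DecidableEq

variable {P : Type} [DecidableEq P]

/-- `¬F` abbreviates `F → ⊥`. -/
def Formula.neg (F : Formula P) : Formula P := .imp F .bot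

/-- Classical evaluation of a formula in an interpretation `X ⊆ P`. -/
def Formula.eval (X : Finset P) : Formula P → Bool
  | .atom p => decide (p ∈ X)
  | .bot => false
  | .and F G => F.eval X && G.eval X
  | .or F G => F.eval X || G.eval X
  | .imp F G => !(F.eval X) || G.eval X

/-- Classical satisfaction `X ⊨ F`. -/
def Formula.sat (X : Finset P) (F : Formula P) : Prop := F.eval X = true

/-- The reduct `F^X`: every maximal subformula not satisfied by `X` is replaced by `⊥`. -/
def Formula.reduct (X : Finset P) : Formula P → Formula P
  | .atom p => if p ∈ X then .atom p else .bot
  | .bot => .bot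
  | .and F G => if (Formula.and F G).eval X then .and (F.reduct X) (G.reduct X) else .bot
  | .or F G => if (Formula.or F G).eval X then .or (F.reduct X) (G.reduct X) else .bot
  | .imp F G => if (Formula.imp F G).eval X then .imp (F.reduct X) (G.reduct X) else .bot

/-- `X` satisfies a (finite) set of formulas. -/
def satSet (X : Finset P) (Γ : Finset (Formula P)) : Prop := ∀ F ∈ Γ, F.sat X

/-- The reduct `Γ^X` of a finite set of formulas. -/
def reductSet (X : Finset P) (Γ : Finset (Formula P)) : Finset (Formula P) :=
  Γ.image (Formula.reduct X)

/-- `X` is a stable model of `Γ` if `X ⊨ Γ^X` and no proper subset of `X` satisfies `Γ^X`. -/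
def StableModel (Γ : Finset (Formula P)) (X : Finset P) : Prop :=
  satSet X (reductSet X Γ) ∧ ∀ Y, Y ⊂ X → ¬ satSet Y (reductSet X Γ)

/-- A weight is a real number (soft) or the symbol `α` (hard). -/
inductive Weight : Type where
  | soft : ℝ → Weight
  | hard : Weight

noncomputable instance : DecidableEq Weight := Classical.decEq _

/-- An LP^MLN program: a finite set of weighted formulas `w : R`. -/
abbrev Program (P : Type) [DecidableEq P] := Finset (Weight × Formula P)

/-- `𝔽_X`: the weighted formulas of `𝔽` whose formula is satisfied by `X`. -/
noncomputable def progSat (𝔽 : Program P) (X : Finset P) : Program P :=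
  𝔽.filter (fun r => r.2.eval X = true)

/-- `𝔽̄`: the formulas of `𝔽`, with weights dropped. -/
noncomputable def formulas (𝔽 : Program P) : Finset (Formula P) := 𝔽.image Prod.snd

/-- `X` is a soft stable model of `𝔽` (i.e. `X ∈ SM[𝔽]`) if `X` is a stable model of `𝔽̄_X`. -/
def SoftStable (𝔽 : Program P) (X : Finset P) : Prop :=
  StableModel (formulas (progSat 𝔽 X)) X

/-- w-expressions: either zero or a formal expression `e^{c₁ + c₂·α}` with `c₁ : ℝ`, `c₂ : ℤ`. -/
inductive WExpr : Type where
  | zero : WExpr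
  | exp : ℝ → ℤ → WExpr

/-- Multiplication of w-expressions: add exponents componentwise; zero is absorbing. -/
def WExpr.mul : WExpr → WExpr → WExpr
  | .zero, _ => .zero
  | _, .zero => .zero
  | .exp a b, .exp c d => .exp (a + c) (b + d)

/-- Inverse of a w-expression: negate both exponents. -/
def WExpr.inv : WExpr → WExpr
  | .zero => .zero
  | .exp a b => .exp (-a) (-b)

/-- Evaluation of a w-expression at a real number `a`. -/
noncomputable def WExpr.eval (a : ℝ) : WExpr → ℝ
  | .zero => 0
  | .exp c₁ c₂ => Real.exp (c₁ + c₂ * a)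

/-- The real contribution of a weight (hard rules contribute `0` to the soft sum). -/
def softWeight : Weight → ℝ
  | .soft r => r
  | .hard => 0

/-- Sum of the weights of the soft rules of `𝔽`. -/
noncomputable def softSum (𝔽 : Program P) : ℝ := ∑ r ∈ 𝔽, softWeight r.1

/-- The number of hard rules of `𝔽`. -/
noncomputable def hardCount (𝔽 : Program P) : ℤ :=
  ((𝔽.filter (fun r => r.1 = Weight.hard)).card : ℤ)

/-- `TW(𝔽) = e^{c₁ + c₂·α}` where `c₁` is the sum of the soft weights and
`c₂` the number of hard rules. -/
noncomputable def TW (𝔽 : Program P) : WExpr := .exp (softSum 𝔽) (hardCount 𝔽)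

open Classical in
/-- `W_𝔽(X) = TW(𝔽_X)` if `X ∈ SM[𝔽]`, and zero otherwise. -/
noncomputable def W (𝔽 : Program P) (X : Finset P) : WExpr :=
  if SoftStable 𝔽 X then TW (progSat 𝔽 X) else .zero

open Classical in
/-- `W^pnt_𝔽(X) = TW(𝔽 \ 𝔽_X)⁻¹` if `X ∈ SM[𝔽]`, and zero otherwise. -/
noncomputable def Wpnt (𝔽 : Program P) (X : Finset P) : WExpr :=
  if SoftStable 𝔽 X then (TW (𝔽 \ progSat 𝔽 X)).inv else .zero

/-- `P_𝔽(X)`: the limit as `a → ∞` of the normalized evaluation of `W_𝔽(X)`. -/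
noncomputable def Pr [Fintype P] (𝔽 : Program P) (X : Finset P) : ℝ :=
  Filter.limUnder Filter.atTop
    (fun a : ℝ => (W 𝔽 X).eval a / ∑ Y : Finset P, (W 𝔽 Y).eval a)

/-- `P^pnt_𝔽(X)`: the limit as `a → ∞` of the normalized evaluation of `W^pnt_𝔽(X)`. -/
noncomputable def PrPnt [Fintype P] (𝔽 : Program P) (X : Finset P) : ℝ :=
  Filter.limUnder Filter.atTop
    (fun a : ℝ => (Wpnt 𝔽 X).eval a / ∑ Y : Finset P, (Wpnt 𝔽 Y).eval a)

/-- Weak equivalence: the same probability distribution. -/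
def WeakEquiv [Fintype P] (𝔽 𝔾 : Program P) : Prop :=
  ∀ X : Finset P, Pr 𝔽 X = Pr 𝔾 X

/-- Strong equivalence of LP^MLN programs. -/
def StrongEquiv [Fintype P] (𝔽 𝔾 : Program P) : Prop :=
  ∀ (ℍ : Program P) (X : Finset P), Pr (𝔽 ∪ ℍ) X = Pr (𝔾 ∪ ℍ) X

/-- Structural equivalence of LP^MLN programs. -/
def StructEquiv (𝔽 𝔾 : Program P) : Prop :=
  ∀ (ℍ : Program P) (X : Finset P), SoftStable (𝔽 ∪ ℍ) X ↔ SoftStable (𝔾 ∪ ℍ) X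

/-- HT satisfaction `⟨Y,X⟩ ⊨ₕₜ F` (at the world "here"). -/
def htSat (Y X : Finset P) : Formula P → Prop
  | .atom p => p ∈ Y
  | .bot => False
  | .and F G => htSat Y X F ∧ htSat Y X G
  | .or F G => htSat Y X F ∨ htSat Y X G
  | .imp F G => (htSat Y X F → htSat Y X G) ∧ (Formula.imp F G).sat X

/-- `⟨Y,X⟩` is an HT model of a set `Γ` of formulas. -/
def HTModel (Γ : Finset (Formula P)) (Y X : Finset P) : Prop :=
  Y ⊆ X ∧ ∀ F ∈ Γ, htSat Y X F

/-- `⟨Y,X⟩` is a soft HT model of an LP^MLN program `𝔽`. -/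
def SoftHT (𝔽 : Program P) (Y X : Finset P) : Prop :=
  Y ⊆ X ∧ ∀ r ∈ progSat 𝔽 X, htSat Y X r.2

/-- The choice formula `{F}^ch = F ∨ ¬F`. -/
def Formula.ch (F : Formula P) : Formula P := .or F F.neg

/-- `{Γ}^ch`, choice formulas of a set of formulas. -/
def chSet (Γ : Finset (Formula P)) : Finset (Formula P) := Γ.image Formula.ch

/-- Renaming of atoms. -/
def Formula.rename {Q : Type} (f : P → Q) : Formula P → Formula Q
  | .atom p => .atom (f p)
  | .bot => .bot
  | .and F G => .and (F.rename f) (G.rename f)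
  | .or F G => .or (F.rename f) (G.rename f)
  | .imp F G => .imp (F.rename f) (G.rename f)

/-- `Δ_{𝒫'}(F)`, a formula over `𝒫 ∪ 𝒫'`; unprimed atoms are `Sum.inl p`,
primed atoms `p'` are `Sum.inr p`. -/
def Formula.delta : Formula P → Formula (P ⊕ P)
  | .atom p => .atom (Sum.inr p)
  | .bot => .bot
  | .and F G => .and F.delta G.delta
  | .or F G => .or F.delta G.delta
  | .imp F G => .and (.imp F.delta G.delta)
      (.imp (F.rename Sum.inl) (G.rename Sum.inl))

/-- `Δ_{𝒫'}(Γ)` for a set of formulas. -/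
def deltaSet (Γ : Finset (Formula P)) : Finset (Formula (P ⊕ P)) :=
  Γ.image Formula.delta

/-- The interpretation `Y' ∪ X` of `𝒫 ∪ 𝒫'`. -/
def primedInterp (Y X : Finset P) : Finset (P ⊕ P) :=
  X.image Sum.inl ∪ Y.image Sum.inr


/-! ### Auxiliary lemmas -/

lemma htSat_eval {Y X : Finset P} (h : Y ⊆ X) (F : Formula P) (hF : htSat Y X F) :
    F.eval X = true := by
  induction F with
  | atom p => simpa [Formula.eval, htSat] using h hF
  | bot => exact hF.elim
  | and F G ihF ihG =>
      simp only [htSat] at hF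
      simp [Formula.eval, ihF hF.1, ihG hF.2]
  | or F G ihF ihG =>
      simp only [htSat] at hF
      simp only [Formula.eval, Bool.or_eq_true]
      rcases hF with h1 | h1
      · exact Or.inl (ihF h1)
      · exact Or.inr (ihG h1)
  | imp F G _ _ => exact hF.2

lemma htSat_self {X : Finset P} (F : Formula P) : htSat X X F ↔ F.eval X = true := by
  induction F with
  | atom p => simp [htSat, Formula.eval]
  | bot => simp [htSat, Formula.eval]
  | and F G ihF ihG => simp [htSat, Formula.eval, ihF, ihG]
  | or F G ihF ihG => simp [htSat, Formula.eval, ihF, ihG]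
  | imp F G ihF ihG =>
      simp only [htSat, Formula.sat, Formula.eval, ihF, ihG, Bool.or_eq_true,
        Bool.not_eq_true']
      constructor
      · exact And.right
      · intro h
        refine ⟨?_, h⟩
        intro hf
        rcases h with h | h
        · rw [hf] at h; exact absurd h (by simp)
        · exact h

lemma reduct_eval {Y X : Finset P} (h : Y ⊆ X) (F : Formula P) :
    (F.reduct X).eval Y = true ↔ htSat Y X F := by
  induction F with
  | atom p =>
      by_cases hp : p ∈ X <;> simp [Formula.reduct, Formula.eval, htSat, hp]
      exact fun hy => hp (h hy)
  | bot => simp [Formula.reduct, Formula.eval, htSat]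
  | and F G ihF ihG =>
      by_cases hx : (Formula.and F G).eval X = true
      · rw [Formula.reduct, if_pos hx]
        simp [Formula.eval, htSat, ihF, ihG]
      · rw [Formula.reduct, if_neg hx]
        simp only [Formula.eval, Bool.false_eq_true, false_iff]
        intro hc
        exact hx (htSat_eval h _ hc)
  | or F G ihF ihG =>
      by_cases hx : (Formula.or F G).eval X = true
      · rw [Formula.reduct, if_pos hx]
        simp [Formula.eval, htSat, ihF, ihG]
      · rw [Formula.reduct, if_neg hx]
        simp only [Formula.eval, Bool.false_eq_true, false_iff]
        intro hc
        exact hx (htSat_eval h _ hc)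
  | imp F G ihF ihG =>
      by_cases hx : (Formula.imp F G).eval X = true
      · rw [Formula.reduct, if_pos hx]
        have hsat : (Formula.imp F G).sat X := hx
        simp only [Formula.eval, htSat, Bool.or_eq_true, Bool.not_eq_true']
        constructor
        · rintro (h1 | h1)
          · refine ⟨fun h2 => absurd (ihF.2 h2) (by rw [h1]; simp), hsat⟩
          · exact ⟨fun _ => ihG.1 h1, hsat⟩
        · rintro ⟨h1, _⟩
          by_cases hf : htSat Y X F
          · exact Or.inr (ihG.2 (h1 hf))
          · left
            cases hfe : (F.reduct X).eval Y
            · rfl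
            · exact absurd (ihF.1 hfe) hf
      · rw [Formula.reduct, if_neg hx]
        simp only [Formula.eval, Bool.false_eq_true, false_iff]
        intro hc
        exact hx hc.2

lemma softHT_iff_satReduct {𝔽 : Program P} {Y X : Finset P} (h : Y ⊆ X) :
    satSet Y (reductSet X (formulas (progSat 𝔽 X))) ↔
      ∀ r ∈ progSat 𝔽 X, htSat Y X r.2 := by
  constructor
  · intro hs r hr
    have hmem : r.2.reduct X ∈ reductSet X (formulas (progSat 𝔽 X)) :=
      Finset.mem_image_of_mem _ (Finset.mem_image_of_mem _ hr)
    exact (reduct_eval h r.2).1 (hs _ hmem)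
  · intro hs F hF
    simp only [reductSet, formulas, Finset.mem_image] at hF
    obtain ⟨G, ⟨r, hr, rfl⟩, rfl⟩ := hF
    exact (reduct_eval h r.2).2 (hs r hr)

lemma softStable_iff {𝔽 : Program P} {X : Finset P} :
    SoftStable 𝔽 X ↔ ∀ Y ⊂ X, ¬ SoftHT 𝔽 Y X := by
  constructor
  · rintro ⟨_, h2⟩ Y hY ⟨hYX, hht⟩
    exact h2 Y hY ((softHT_iff_satReduct hYX).2 hht)
  · intro h
    refine ⟨(softHT_iff_satReduct (le_refl X)).2 ?_,
      fun Y hY hs => h Y hY ⟨hY.subset, (softHT_iff_satReduct hY.subset).1 hs⟩⟩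
    intro r hr
    exact (htSat_self r.2).2 (Finset.mem_filter.1 hr).2

lemma progSat_union {𝔽 𝔾 : Program P} {X : Finset P} :
    progSat (𝔽 ∪ 𝔾) X = progSat 𝔽 X ∪ progSat 𝔾 X :=
  Finset.filter_union _ _ _

lemma softHT_union {𝔽 𝔾 : Program P} {Y X : Finset P} :
    SoftHT (𝔽 ∪ 𝔾) Y X ↔ SoftHT 𝔽 Y X ∧ SoftHT 𝔾 Y X := by
  unfold SoftHT
  rw [progSat_union]
  constructor
  · rintro ⟨h1, h2⟩
    exact ⟨⟨h1, fun r hr => h2 r (Finset.mem_union_left _ hr)⟩,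
      ⟨h1, fun r hr => h2 r (Finset.mem_union_right _ hr)⟩⟩
  · rintro ⟨⟨h1, h2⟩, ⟨_, h3⟩⟩
    refine ⟨h1, fun r hr => ?_⟩
    rcases Finset.mem_union.1 hr with h | h
    · exact h2 r h
    · exact h3 r h

/-- The auxiliary program used in the proof: atoms of `Y` as hard facts and
implications between atoms of `X \ Y`. -/
noncomputable def prog0 (Y X : Finset P) : Program P :=
  Y.image (fun p => (Weight.hard, Formula.atom p)) ∪
  ((X \ Y) ×ˢ (X \ Y)).image
    (fun pq => (Weight.hard, Formula.imp (.atom pq.1) (.atom pq.2)))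

lemma mem_prog0 {Y X : Finset P} {r : Weight × Formula P} :
    r ∈ prog0 Y X ↔ (∃ p ∈ Y, r = (Weight.hard, Formula.atom p)) ∨
      (∃ p q : P, p ∈ X \ Y ∧ q ∈ X \ Y ∧
        r = (Weight.hard, Formula.imp (.atom p) (.atom q))) := by
  simp only [prog0, Finset.mem_union, Finset.mem_image, Finset.mem_product]
  constructor
  · rintro (⟨p, hp, rfl⟩ | ⟨⟨p, q⟩, ⟨hp, hq⟩, rfl⟩)
    · exact Or.inl ⟨p, hp, rfl⟩
    · exact Or.inr ⟨p, q, hp, hq, rfl⟩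
  · rintro (⟨p, hp, rfl⟩ | ⟨p, q, hp, hq, rfl⟩)
    · exact Or.inl ⟨p, hp, rfl⟩
    · exact Or.inr ⟨⟨p, q⟩, ⟨hp, hq⟩, rfl⟩

lemma softHT_prog0_self {Y X : Finset P} (h : Y ⊆ X) : SoftHT (prog0 Y X) Y X := by
  refine ⟨h, fun r hr => ?_⟩
  have hev : r.2.eval X = true := (Finset.mem_filter.1 hr).2
  have hm := Finset.filter_subset _ _ hr
  rcases mem_prog0.1 hm with ⟨p, hp, rfl⟩ | ⟨p, q, hp, _, rfl⟩
  · simpa [htSat] using hp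
  · refine ⟨fun hc => absurd hc ?_, hev⟩
    simpa [htSat] using (Finset.mem_sdiff.1 hp).2

lemma softHT_prog0_eq {Y X Z : Finset P} (hY : Y ⊆ X) (hZ : Z ⊂ X)
    (h : SoftHT (prog0 Y X) Z X) : Z = Y := by
  obtain ⟨hZX, hall⟩ := h
  have hYZ : Y ⊆ Z := by
    intro p hp
    have hm : (Weight.hard, Formula.atom p) ∈ prog0 Y X := mem_prog0.2 (Or.inl ⟨p, hp, rfl⟩)
    have hmem : (Weight.hard, Formula.atom p) ∈ progSat (prog0 Y X) X :=
      Finset.mem_filter.2 ⟨hm, by simp [Formula.eval, hY hp]⟩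
    simpa [htSat] using hall _ hmem
  refine Finset.Subset.antisymm ?_ hYZ
  intro z hz
  by_contra hzY
  obtain ⟨x, hxX, hxZ⟩ := Finset.exists_of_ssubset hZ
  have hxY : x ∉ Y := fun hc => hxZ (hYZ hc)
  have hm : (Weight.hard, Formula.imp (.atom z) (.atom x)) ∈ prog0 Y X :=
    mem_prog0.2 (Or.inr ⟨z, x, Finset.mem_sdiff.2 ⟨hZX hz, hzY⟩,
      Finset.mem_sdiff.2 ⟨hxX, hxY⟩, rfl⟩)
  have hmem : (Weight.hard, Formula.imp (.atom z) (.atom x)) ∈ progSat (prog0 Y X) X :=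
    Finset.mem_filter.2 ⟨hm, by simp [Formula.eval, hxX]⟩
  have := (hall _ hmem).1
  simp only [htSat] at this
  exact hxZ (this hz)

/-- Key step of the forward direction. -/
lemma structEquiv_softHT {𝔽 𝔾 : Program P} (h : StructEquiv 𝔽 𝔾) {Y X : Finset P}
    (hYX : SoftHT 𝔽 Y X) : SoftHT 𝔾 Y X := by
  have hsub : Y ⊆ X := hYX.1
  by_cases hYeq : Y = X
  · subst hYeq
    exact ⟨le_refl _, fun r hr => (htSat_self r.2).2 (Finset.mem_filter.1 hr).2⟩
  · have hss : Y ⊂ X := lt_of_le_of_ne hsub hYeq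
    by_contra hG
    have hGstable : SoftStable (𝔾 ∪ prog0 Y X) X := by
      rw [softStable_iff]
      intro Z hZ hc
      rw [softHT_union] at hc
      have := softHT_prog0_eq hsub hZ hc.2
      subst this
      exact hG hc.1
    have hFstable : SoftStable (𝔽 ∪ prog0 Y X) X := (h (prog0 Y X) X).2 hGstable
    rw [softStable_iff] at hFstable
    exact hFstable Y hss (softHT_union.2 ⟨hYX, softHT_prog0_self hsub⟩)

lemma structEquiv_symm {𝔽 𝔾 : Program P} (h : StructEquiv 𝔽 𝔾) : StructEquiv 𝔾 𝔽 :=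
  fun ℍ X => (h ℍ X).symm

/-- structural equivalence iff the programs have the same soft HT models. -/
theorem stmt12 {P : Type} [DecidableEq P] (𝔽 𝔾 : Program P) :
    StructEquiv 𝔽 𝔾 ↔ ∀ Y X : Finset P, SoftHT 𝔽 Y X ↔ SoftHT 𝔾 Y X := by
  constructor
  · intro h Y X
    exact ⟨structEquiv_softHT h, structEquiv_softHT (structEquiv_symm h)⟩
  · intro h ℍ X
    rw [softStable_iff, softStable_iff]
    constructor
    · intro h1 Y hY hc
      rw [softHT_union] at hc
      exact h1 Y hY (softHT_union.2 ⟨(h Y X).2 hc.1, hc.2⟩)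
    · intro h1 Y hY hc
      rw [softHT_union] at hc
      exact h1 Y hY (softHT_union.2 ⟨(h Y X).1 hc.1, hc.2⟩)

end LPMLN
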